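/- For k ∈ ℕ, the polynomial P_k(x) = (−1)^k ∫_0^∞ e^{−t} L_k(2t + 2x) dt has the explicit expansion P_k(x) = Σ_{m=0}^{k} (x^m / m!) · Σ_{l=m}^{k} 2^l (−1)^{k−l} C(k,l). -/

import Mathlib

open MeasureTheory Real

/-- The classical Laguerre polynomial `L_k(x) = ∑_{l=0}^{k} ((-1)^l / l!) C(k,l) x^l`. -/
noncomputable def laguerre (k : ℕ) (x : ℝ) : ℝ :=
  ∑ l ∈ Finset.range (k + 1), ((-1 : ℝ) ^ l / l.factorial) * (k.choose l) * x ^ l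

/-- `P_k(x) = (-1)^k ∫_0^∞ e^{-t} L_k(2t + 2x) dt`. -/
noncomputable def laguerreP (k : ℕ) (x : ℝ) : ℝ :=
  (-1 : ℝ) ^ k * ∫ t in Set.Ioi (0 : ℝ), Real.exp (-t) * laguerre k (2 * t + 2 * x)

lemma integ_pow (n : ℕ) : ∫ t in Set.Ioi (0:ℝ), Real.exp (-t) * t ^ n = n.factorial := by
  have h := Real.Gamma_eq_integral (s := (n:ℝ) + 1) (by positivity)
  rw [Real.Gamma_nat_eq_factorial] at h
  rw [h]
  refine setIntegral_congr_fun measurableSet_Ioi (fun t ht => ?_)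
  rw [add_sub_cancel_right, Real.rpow_natCast]

lemma integ_pow_integrable (n : ℕ) :
    IntegrableOn (fun t : ℝ => Real.exp (-t) * t ^ n) (Set.Ioi 0) := by
  have h := Real.GammaIntegral_convergent (s := (n:ℝ) + 1) (by positivity)
  refine h.congr_fun (fun t ht => ?_) measurableSet_Ioi
  simp only [add_sub_cancel_right, Real.rpow_natCast]

theorem laguerreP_expansion (k : ℕ) (x : ℝ) :
    laguerreP k x
      = ∑ m ∈ Finset.range (k + 1), (x ^ m / m.factorial) *
          ∑ l ∈ Finset.Icc m k, (2 : ℝ) ^ l * (-1 : ℝ) ^ (k - l) * (k.choose l) := by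
  set coef : ℕ → ℕ → ℝ := fun l m =>
    ((-1 : ℝ) ^ l / l.factorial) * (k.choose l) * (l.choose m) * (2*x) ^ m * 2 ^ (l - m)
    with hcoef
  have expand : ∀ t : ℝ, Real.exp (-t) * laguerre k (2 * t + 2 * x)
      = ∑ l ∈ Finset.range (k+1), ∑ m ∈ Finset.range (l+1),
          coef l m * (Real.exp (-t) * t ^ (l - m)) := by
    intro t
    unfold laguerre
    rw [Finset.mul_sum]
    refine Finset.sum_congr rfl (fun l _ => ?_)
    rw [show 2*t+2*x = 2*x+2*t by ring, add_pow]
    rw [Finset.mul_sum, Finset.mul_sum]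
    refine Finset.sum_congr rfl (fun m _ => ?_)
    simp only [hcoef]
    have : (2*t) ^ (l-m) = 2^(l-m) * t^(l-m) := mul_pow _ _ _
    rw [this]; ring
  have hint : ∀ (c : ℝ) (n : ℕ),
      IntegrableOn (fun t : ℝ => c * (Real.exp (-t) * t ^ n)) (Set.Ioi 0) :=
    fun c n => (integ_pow_integrable n).const_mul c
  have key : (∫ t in Set.Ioi (0:ℝ), Real.exp (-t) * laguerre k (2 * t + 2 * x))
      = ∑ l ∈ Finset.range (k+1), ∑ m ∈ Finset.range (l+1),
          coef l m * ((l-m).factorial : ℝ) := by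
    simp_rw [expand]
    rw [integral_finset_sum _ (fun l _ => integrable_finset_sum _ (fun m _ => hint _ _))]
    refine Finset.sum_congr rfl (fun l _ => ?_)
    rw [integral_finset_sum _ (fun m _ => hint _ _)]
    refine Finset.sum_congr rfl (fun m _ => ?_)
    rw [integral_const_mul, integ_pow]
  unfold laguerreP
  rw [key, Finset.mul_sum]
  simp_rw [Finset.mul_sum]
  rw [Finset.sum_comm' (t' := Finset.range (k+1)) (s' := fun m => Finset.Icc m k)
      (by intro l m; simp only [Finset.mem_range, Finset.mem_Icc]; omega)]
  refine Finset.sum_congr rfl (fun m hm => ?_)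
  refine Finset.sum_congr rfl (fun l hl => ?_)
  simp only [Finset.mem_Icc] at hl
  obtain ⟨hml, hlk⟩ := hl
  simp only [hcoef]
  have h1 : ((-1:ℝ))^(k-l) = (-1)^(k+l) := by
    have hh : k + l = (k - l) + 2*l := by omega
    rw [hh, pow_add, pow_mul]; norm_num
  have h2 : (l.factorial : ℝ) = (l.choose m) * (m.factorial) * ((l-m).factorial) := by
    exact_mod_cast (Nat.choose_mul_factorial_mul_factorial hml).symm
  have h3 : (2:ℝ)^m * 2^(l-m) = 2^l := by
    rw [← pow_add]; congr 1; omega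
  have hm0 : (m.factorial : ℝ) ≠ 0 := by positivity
  have hlm0 : ((l-m).factorial : ℝ) ≠ 0 := by positivity
  have hc0 : ((l.choose m):ℝ) ≠ 0 := Nat.cast_ne_zero.mpr (Nat.choose_pos hml).ne'
  rw [h1, pow_add, h2, mul_pow]
  field_simp
  linear_combination ((k.choose l : ℝ) * x^m) * h3
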